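/- Let (w_e)_{e∈E} be mutually independent real-valued random variables indexed by a nonempty finite set E, let τ ∈ ℝ, and set γ := P[w_e ≤ τ for every e ∈ E]. If γ > 0, then the probability that there exists exactly one e ∈ E with w_e > τ is at least γ · log(1/γ). -/

import Mathlib

open MeasureTheory ProbabilityTheory

/-- Let `(w_e)` be mutually independent real random variables indexed by a
nonempty finite set, `τ ∈ ℝ`, and `γ := P[∀ e, w_e ≤ τ]`. If `γ > 0`, then the probability
that there exists exactly one `e` with `w_e > τ` is at least `γ · log(1/γ)`. -/
theorem prob_exactly_one_above_threshold
    {Ω : Type*} [MeasurableSpace Ω] (μ : Measure Ω) [IsProbabilityMeasure μ]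
    {E : Type*} [Fintype E] [Nonempty E]
    (w : E → Ω → ℝ) (hmeas : ∀ e, Measurable (w e))
    (hindep : iIndepFun w μ)
    (τ γ : ℝ) (hγ : γ = (μ {ω | ∀ e, w e ω ≤ τ}).toReal) (hγpos : 0 < γ) :
    γ * Real.log (1 / γ) ≤ (μ {ω | ∃! e, τ < w e ω}).toReal := by
  classical
  set S : E → Set Ω := fun e => w e ⁻¹' Set.Iic τ with hSdef
  have hSm : ∀ e, MeasurableSet (S e) := fun e => (hmeas e) measurableSet_Iic
  set p : E → ℝ := fun e => (μ (S e)).toReal with hpdef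
  -- γ is the product of the p e
  have hA : μ {ω | ∀ e, w e ω ≤ τ} = ∏ e, μ (S e) := by
    have heq : {ω | ∀ e, w e ω ≤ τ} = ⋂ e, S e := by
      ext ω; simp [hSdef, Set.mem_iInter]
    rw [heq]
    exact hindep.meas_iInter (fun i => ⟨Set.Iic τ, measurableSet_Iic, rfl⟩)
  have hγprod : γ = ∏ e, p e := by
    rw [hγ, hA, ENNReal.toReal_prod]
  have hppos : ∀ e, 0 < p e := by
    intro e
    rcases lt_or_eq_of_le (ENNReal.toReal_nonneg : (0:ℝ) ≤ p e) with h | h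
    · exact h
    · exfalso
      have : γ = 0 := by
        rw [hγprod]
        exact Finset.prod_eq_zero (Finset.mem_univ e) h.symm
      linarith
  have hple : ∀ e, p e ≤ 1 := fun e => ENNReal.toReal_le_of_le_ofReal zero_le_one
    (by simpa using prob_le_one (μ := μ) (s := S e))
  -- the exactly-one event as a disjoint union
  set U : E → Set Ω := fun e => ⋂ f, (if f = e then w f ⁻¹' Set.Ioi τ else S f) with hUdef
  have hUmem : ∀ e ω, ω ∈ U e ↔ (τ < w e ω ∧ ∀ f, f ≠ e → w f ω ≤ τ) := by
    intro e ω
    simp only [hUdef, Set.mem_iInter]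
    constructor
    · intro h
      refine ⟨by simpa using h e, fun f hf => by simpa [hf, hSdef] using h f⟩
    · intro h f
      by_cases hf : f = e
      · subst hf; simpa using h.1
      · simpa [hf, hSdef] using h.2 f hf
  have hUeq : {ω | ∃! e, τ < w e ω} = ⋃ e, U e := by
    ext ω
    simp only [Set.mem_setOf_eq, Set.mem_iUnion]
    constructor
    · rintro ⟨e, he, huniq⟩
      exact ⟨e, (hUmem e ω).2 ⟨he, fun f hf => not_lt.1 fun h => hf (huniq f h)⟩⟩
    · rintro ⟨e, he⟩
      obtain ⟨h1, h2⟩ := (hUmem e ω).1 he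
      exact ⟨e, h1, fun f hf => by_contra fun hne => absurd (h2 f hne) (not_le.2 hf)⟩
  have hUm : ∀ e, MeasurableSet (U e) := by
    intro e
    refine MeasurableSet.iInter fun f => ?_
    by_cases hf : f = e
    · simpa [hf] using (hmeas f) measurableSet_Ioi
    · simpa [hf] using hSm f
  have hUdisj : Pairwise (Function.onFun Disjoint U) := by
    intro e e' hee
    refine Set.disjoint_left.2 fun ω he he' => ?_
    have h1 := ((hUmem e ω).1 he).1
    have h2 := ((hUmem e' ω).1 he').2 e hee
    exact absurd h1 (not_lt.2 h2)
  have hUmeas : ∀ e, μ (U e) = μ (w e ⁻¹' Set.Ioi τ) * ∏ f ∈ Finset.univ.erase e, μ (S f) := by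
    intro e
    have := hindep.meas_iInter (s := fun f => if f = e then w f ⁻¹' Set.Ioi τ else S f)
      (fun i => by
        by_cases hi : i = e
        · exact ⟨Set.Ioi τ, measurableSet_Ioi, by simp [hi]⟩
        · exact ⟨Set.Iic τ, measurableSet_Iic, by simp [hi, hSdef]⟩)
    rw [hUdef]
    rw [this, ← Finset.mul_prod_erase _ _ (Finset.mem_univ e)]
    congr 1
    · simp
    · exact Finset.prod_congr rfl fun f hf => by
        simp [Finset.mem_erase.1 hf |>.1]
  -- compute the measure of the union in real numbers
  have hsum : (μ {ω | ∃! e, τ < w e ω}).toReal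
      = ∑ e, (1 - p e) * ∏ f ∈ Finset.univ.erase e, p f := by
    rw [hUeq, measure_iUnion hUdisj hUm, tsum_fintype, ENNReal.toReal_sum
      (fun e _ => measure_ne_top μ _)]
    refine Finset.sum_congr rfl fun e _ => ?_
    rw [hUmeas e, ENNReal.toReal_mul, ENNReal.toReal_prod]
    congr 1
    have hcompl : w e ⁻¹' Set.Ioi τ = (S e)ᶜ := by
      ext ω; simp [hSdef, not_le]
    rw [hcompl, prob_compl_eq_one_sub (hSm e),
      ENNReal.toReal_sub_of_le (prob_le_one) ENNReal.one_ne_top, ENNReal.toReal_one]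
  rw [hsum]
  -- the analytic inequality
  have hlog : Real.log (1 / γ) = ∑ e, Real.log (1 / p e) := by
    rw [one_div, Real.log_inv, hγprod, Real.log_prod (fun e _ => (hppos e).ne'),
      ← Finset.sum_neg_distrib]
    exact Finset.sum_congr rfl fun e _ => by rw [one_div, Real.log_inv]
  rw [hlog, Finset.mul_sum]
  refine Finset.sum_le_sum fun e _ => ?_
  have hγe : γ = p e * ∏ f ∈ Finset.univ.erase e, p f := by
    rw [hγprod, Finset.mul_prod_erase _ _ (Finset.mem_univ e)]
  have hprodnn : (0:ℝ) ≤ ∏ f ∈ Finset.univ.erase e, p f :=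
    Finset.prod_nonneg fun f _ => (hppos f).le
  have h1 : Real.log (1 / p e) ≤ 1 / p e - 1 :=
    Real.log_le_sub_one_of_pos (one_div_pos.2 (hppos e))
  have hkey : Real.log (1 / p e) * p e ≤ 1 - p e := by
    calc Real.log (1 / p e) * p e ≤ (1 / p e - 1) * p e :=
          mul_le_mul_of_nonneg_right h1 (hppos e).le
      _ = 1 - p e := by rw [sub_mul, one_div_mul_cancel (hppos e).ne', one_mul]
  rw [hγe]
  calc p e * (∏ f ∈ Finset.univ.erase e, p f) * Real.log (1 / p e)
      = (∏ f ∈ Finset.univ.erase e, p f) * (Real.log (1 / p e) * p e) := by ring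
    _ ≤ (∏ f ∈ Finset.univ.erase e, p f) * (1 - p e) :=
        mul_le_mul_of_nonneg_left hkey hprodnn
    _ = (1 - p e) * ∏ f ∈ Finset.univ.erase e, p f := by ring
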